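/- With N independent identical product-channel terms and perfect phase alignment (φ_n = 0), if E[c₀²] = ς, E[a_n²] = ϱ, E[b_n²] = ϑ, and each of c₀, a_n, b_n is Rayleigh, then E[(c₀ + ∑_{n=1}^N a_n b_n)²] = ς + Nϱϑ + (π²N(N-1)/16)·ϱϑ + (πN/4)·√(πςϱϑ). -/

import Mathlib

open MeasureTheory Real ProbabilityTheory
open scoped NNReal ENNReal

/-- The Rayleigh distribution with scale `σ`, as a measure on `ℝ` with density
`x ↦ (x/σ²)e^{-x²/(2σ²)}` on `[0,∞)`. -/
noncomputable def rayleighMeasure (σ : ℝ) : Measure ℝ :=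
  volume.withDensity fun x => ENNReal.ofReal
    (Set.indicator (Set.Ici 0) (fun x => x / σ ^ 2 * Real.exp (-x ^ 2 / (2 * σ ^ 2))) x)

lemma rayleigh_withDensity (s : ℝ) (hs : 0 < s) :
    rayleighMeasure (Real.sqrt (s / 2)) =
      volume.withDensity fun x => ENNReal.ofReal
        ((Set.Ici (0:ℝ)).indicator (fun x => 2 * x / s * Real.exp (-x ^ 2 / s)) x) := by
  unfold rayleighMeasure
  have h2 : Real.sqrt (s / 2) ^ 2 = s / 2 := Real.sq_sqrt (by linarith)
  have h3 : (fun x : ℝ => x / Real.sqrt (s / 2) ^ 2 *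
      Real.exp (-x ^ 2 / (2 * Real.sqrt (s / 2) ^ 2))) =
      fun x => 2 * x / s * Real.exp (-x ^ 2 / s) := by
    funext x
    rw [h2]
    congr 1
    · field_simp
    · congr 1; field_simp
  rw [h3]

lemma rayleigh_integral_pow (s : ℝ) (hs : 0 < s) (k : ℕ) :
    ∫ x, x ^ k ∂(rayleighMeasure (Real.sqrt (s / 2))) =
      s ^ ((k : ℝ) / 2) * Real.Gamma (((k : ℝ) + 2) / 2) := by
  rw [rayleigh_withDensity s hs]
  set d : ℝ → ℝ := (Set.Ici (0:ℝ)).indicator (fun x => 2 * x / s * Real.exp (-x ^ 2 / s)) with hd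
  have hd_nonneg : ∀ x, 0 ≤ d x := by
    intro x
    apply Set.indicator_nonneg
    intro y hy
    have : (0:ℝ) ≤ y := hy
    positivity
  have hdm : Measurable d := by
    apply Measurable.indicator _ measurableSet_Ici
    fun_prop
  have h1 : (volume.withDensity fun x => ENNReal.ofReal (d x)) =
      volume.withDensity fun x => ((Real.toNNReal (d x) : ℝ≥0) : ℝ≥0∞) := rfl
  rw [h1, integral_withDensity_eq_integral_smul (by fun_prop) _]
  have h2 : (fun x => Real.toNNReal (d x) • x ^ k) =
      (Set.Ici (0:ℝ)).indicator (fun x => 2 * x / s * Real.exp (-x ^ 2 / s) * x ^ k) := by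
    funext x
    by_cases hx : x ∈ Set.Ici (0:ℝ)
    · rw [NNReal.smul_def, Real.coe_toNNReal _ (hd_nonneg x)]
      simp only [hd, Set.indicator_of_mem hx, smul_eq_mul]
    · simp [hd, Set.indicator_of_notMem hx]
  rw [h2, integral_indicator measurableSet_Ici, integral_Ici_eq_integral_Ioi]
  have h3 : ∀ x ∈ Set.Ioi (0:ℝ), 2 * x / s * Real.exp (-x ^ 2 / s) * x ^ k =
      (2 / s) * (x ^ ((k : ℝ) + 1) * Real.exp (-(s⁻¹) * x ^ (2:ℝ))) := by
    intro x hx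
    have hx0 : (0:ℝ) < x := hx
    rw [show ((k : ℝ) + 1) = ((k + 1 : ℕ) : ℝ) by push_cast; ring, Real.rpow_natCast,
      show (2:ℝ) = ((2:ℕ):ℝ) by norm_num, Real.rpow_natCast]
    rw [pow_succ]
    field_simp
    ring
  rw [setIntegral_congr_fun measurableSet_Ioi h3, integral_const_mul,
    integral_rpow_mul_exp_neg_mul_rpow two_pos (by have := Nat.cast_nonneg (α := ℝ) k; linarith) (by positivity)]
  have hsi : (s⁻¹) ^ (-((k : ℝ) + 1 + 1) / 2) = s ^ (((k : ℝ) + 2) / 2) := by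
    rw [Real.inv_rpow hs.le, ← Real.rpow_neg hs.le]
    congr 1
    ring
  rw [hsi]
  have hss : s ^ (((k : ℝ) + 2) / 2) = s ^ ((k : ℝ) / 2) * s := by
    rw [show ((k : ℝ) + 2) / 2 = (k : ℝ) / 2 + 1 by ring, Real.rpow_add hs, Real.rpow_one]
  rw [hss]
  have hG : ((k : ℝ) + 1 + 1) / 2 = ((k : ℝ) + 2) / 2 := by ring
  rw [hG]
  field_simp

lemma rayleigh_integrable_pow (s : ℝ) (hs : 0 < s) (k : ℕ) :
    Integrable (fun x => x ^ k) (rayleighMeasure (Real.sqrt (s / 2))) := by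
  rw [rayleigh_withDensity s hs]
  set d : ℝ → ℝ := (Set.Ici (0:ℝ)).indicator (fun x => 2 * x / s * Real.exp (-x ^ 2 / s)) with hd
  have hd_nonneg : ∀ x, 0 ≤ d x := by
    intro x
    apply Set.indicator_nonneg
    intro y hy
    have : (0:ℝ) ≤ y := hy
    positivity
  have hdm : Measurable d := by
    apply Measurable.indicator _ measurableSet_Ici
    fun_prop
  rw [integrable_withDensity_iff (by fun_prop) (ae_of_all _ fun x => ENNReal.ofReal_lt_top)]
  have h2 : (fun x => x ^ k * (ENNReal.ofReal (d x)).toReal) =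
      (Set.Ici (0:ℝ)).indicator (fun x => x ^ k * (2 * x / s * Real.exp (-x ^ 2 / s))) := by
    funext x
    rw [ENNReal.toReal_ofReal (hd_nonneg x)]
    by_cases hx : x ∈ Set.Ici (0:ℝ)
    · simp only [hd, Set.indicator_of_mem hx]
    · simp [hd, Set.indicator_of_notMem hx]
  rw [h2, integrable_indicator_iff measurableSet_Ici, integrableOn_Ici_iff_integrableOn_Ioi]
  have base : Integrable (fun x : ℝ => x ^ (k + 1) * Real.exp (-s⁻¹ * x ^ 2)) := by
    have := integrable_rpow_mul_exp_neg_mul_sq (b := s⁻¹) (by positivity)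
      (s := ((k:ℝ) + 1)) (by have := Nat.cast_nonneg (α := ℝ) k; linarith)
    have heq : (fun x : ℝ => x ^ ((k:ℝ) + 1) * Real.exp (-s⁻¹ * x ^ 2)) =
        fun x : ℝ => x ^ (k + 1) * Real.exp (-s⁻¹ * x ^ 2) := by
      funext x
      rw [show ((k : ℝ) + 1) = ((k + 1 : ℕ) : ℝ) by push_cast; ring, Real.rpow_natCast]
    rwa [heq] at this
  have base2 : IntegrableOn (fun x : ℝ => (2 / s) * (x ^ (k + 1) * Real.exp (-s⁻¹ * x ^ 2)))
      (Set.Ioi 0) := (base.const_mul _).integrableOn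
  apply base2.congr_fun _ measurableSet_Ioi
  intro x hx
  have hx0 : (0:ℝ) < x := hx
  simp only [pow_succ]
  field_simp

lemma aemeasurable_of_rayleigh_law {Ω : Type*} [MeasureSpace Ω] {X : Ω → ℝ} {s : ℝ}
    (hs : 0 < s) (hlaw : Measure.map X volume = rayleighMeasure (Real.sqrt (s / 2))) :
    AEMeasurable X volume := by
  by_contra h
  rw [Measure.map_of_not_aemeasurable h] at hlaw
  have h0 := rayleigh_integral_pow s hs 0
  rw [← hlaw] at h0
  simp [Real.Gamma_one] at h0

lemma integral_pow_of_rayleigh_law {Ω : Type*} [MeasureSpace Ω] {X : Ω → ℝ} {s : ℝ}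
    (hs : 0 < s) (hlaw : Measure.map X volume = rayleighMeasure (Real.sqrt (s / 2))) (k : ℕ) :
    (∫ ω, X ω ^ k) = s ^ ((k : ℝ) / 2) * Real.Gamma (((k : ℝ) + 2) / 2) := by
  have hX := aemeasurable_of_rayleigh_law hs hlaw
  have h1 : ∫ x, x ^ k ∂(Measure.map X volume) = ∫ ω, X ω ^ k :=
    integral_map hX (Measurable.aestronglyMeasurable (by fun_prop : Measurable fun x : ℝ => x ^ k))
  rw [← h1, hlaw, rayleigh_integral_pow s hs k]

lemma integrable_pow_of_rayleigh_law {Ω : Type*} [MeasureSpace Ω] {X : Ω → ℝ} {s : ℝ}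
    (hs : 0 < s) (hlaw : Measure.map X volume = rayleighMeasure (Real.sqrt (s / 2))) (k : ℕ) :
    Integrable (fun ω => X ω ^ k) volume := by
  have hX := aemeasurable_of_rayleigh_law hs hlaw
  have h := rayleigh_integrable_pow s hs k
  rw [← hlaw] at h
  exact (integrable_map_measure
    (Measurable.aestronglyMeasurable (by fun_prop : Measurable fun x : ℝ => x ^ k)) hX).mp h

lemma integral_of_rayleigh_law {Ω : Type*} [MeasureSpace Ω] {X : Ω → ℝ} {s : ℝ}
    (hs : 0 < s) (hlaw : Measure.map X volume = rayleighMeasure (Real.sqrt (s / 2))) :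
    (∫ ω, X ω) = Real.sqrt (π * s) / 2 := by
  have h := integral_pow_of_rayleigh_law hs hlaw 1
  simp only [pow_one, Nat.cast_one] at h
  rw [h]
  have hG : Real.Gamma ((1 + 2) / 2) = Real.sqrt π / 2 := by
    rw [show ((1:ℝ) + 2) / 2 = 1/2 + 1 by norm_num, Real.Gamma_add_one (by norm_num),
      Real.Gamma_one_half_eq]
    ring
  rw [hG, show (1:ℝ)/2 = (1/2 : ℝ) by norm_num, ← Real.sqrt_eq_rpow,
    Real.sqrt_mul Real.pi_pos.le]
  ring

lemma integral_sq_of_rayleigh_law {Ω : Type*} [MeasureSpace Ω] {X : Ω → ℝ} {s : ℝ}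
    (hs : 0 < s) (hlaw : Measure.map X volume = rayleighMeasure (Real.sqrt (s / 2))) :
    (∫ ω, X ω ^ 2) = s := by
  have h := integral_pow_of_rayleigh_law hs hlaw 2
  simp only [Nat.cast_ofNat] at h
  rw [h, show ((2:ℝ) + 2) / 2 = 2 by norm_num, Real.Gamma_two,
    show ((2:ℝ)) / 2 = 1 by norm_num, Real.rpow_one, mul_one]

lemma iIndepFun_congr_ae {ι Ω : Type*} {mΩ : MeasurableSpace Ω} {μ : Measure Ω}
    {β : ι → Type*} {m : ∀ i, MeasurableSpace (β i)} {f g : ∀ i, Ω → β i}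
    (h : iIndepFun (m := m) f μ) (hfg : ∀ i, f i =ᵐ[μ] g i) : iIndepFun (m := m) g μ := by
  rw [iIndepFun_iff_measure_inter_preimage_eq_mul] at h ⊢
  intro S sets hsets
  have h1 : ∀ᵐ ω ∂μ, ∀ i ∈ S, f i ω = g i ω :=
    (Filter.eventually_all_finset S).2 fun i _ => hfg i
  have hIeq : μ (⋂ i ∈ S, g i ⁻¹' sets i) = μ (⋂ i ∈ S, f i ⁻¹' sets i) := by
    apply measure_congr
    filter_upwards [h1] with ω hω
    show (ω ∈ ⋂ i ∈ S, g i ⁻¹' sets i) = (ω ∈ ⋂ i ∈ S, f i ⁻¹' sets i)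
    simp only [Set.mem_iInter, Set.mem_preimage, eq_iff_iff]
    exact ⟨fun hh i hi => (hω i hi) ▸ hh i hi, fun hh i hi => (hω i hi).symm ▸ hh i hi⟩
  rw [hIeq, h S hsets]
  refine Finset.prod_congr rfl fun i hi => ?_
  apply measure_congr
  filter_upwards [hfg i] with ω hω
  show (f i ω ∈ sets i) = (g i ω ∈ sets i)
  rw [hω]

/-- Indexing of the family `{c₀} ∪ {a_n} ∪ {b_n}`. -/
def famIdx (N : ℕ) := Unit ⊕ (Fin N × Bool)

/-- With perfect phase alignment (`φ_n = 0`), mutually independent Rayleigh variables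
`c₀, a_n, b_n` with `E[c₀²] = ς`, `E[a_n²] = ϱ`, `E[b_n²] = ϑ` (so the Rayleigh scales
are `√(ς/2)`, `√(ϱ/2)`, `√(ϑ/2)`) satisfy
`E[(c₀ + ∑ₙ aₙbₙ)²] = ς + Nϱϑ + (π²N(N-1)/16)ϱϑ + (πN/4)√(πςϱϑ)`. -/
theorem second_moment_perfect_phase
    {Ω : Type*} [MeasureSpace Ω] [IsProbabilityMeasure (volume : Measure Ω)]
    (N : ℕ) (c₀ : Ω → ℝ) (a b : Fin N → Ω → ℝ)
    (ς ϱ ϑ : ℝ) (hς : 0 < ς) (hϱ : 0 < ϱ) (hϑ : 0 < ϑ)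
    (hlaw₀ : Measure.map c₀ volume = rayleighMeasure (Real.sqrt (ς / 2)))
    (hlawa : ∀ n, Measure.map (a n) volume = rayleighMeasure (Real.sqrt (ϱ / 2)))
    (hlawb : ∀ n, Measure.map (b n) volume = rayleighMeasure (Real.sqrt (ϑ / 2)))
    (hindep : iIndepFun (m := fun _ : famIdx N => Real.measurableSpace)
      (fun i => Sum.elim (fun _ => c₀) (fun p => if p.2 then b p.1 else a p.1) i)
      volume) :
    (∫ ω, (c₀ ω + ∑ n, a n ω * b n ω) ^ 2) =
      ς + N * ϱ * ϑ + π ^ 2 * N * (N - 1) / 16 * (ϱ * ϑ)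
        + π * N / 4 * Real.sqrt (π * ς * ϱ * ϑ) := by
  classical
  have hmc : AEMeasurable c₀ volume := aemeasurable_of_rayleigh_law hς hlaw₀
  have hma : ∀ n, AEMeasurable (a n) volume := fun n =>
    aemeasurable_of_rayleigh_law hϱ (hlawa n)
  have hmb : ∀ n, AEMeasurable (b n) volume := fun n =>
    aemeasurable_of_rayleigh_law hϑ (hlawb n)
  set C : Ω → ℝ := hmc.mk c₀ with hCdef
  set A : Fin N → Ω → ℝ := fun n => (hma n).mk (a n) with hAdef
  set B : Fin N → Ω → ℝ := fun n => (hmb n).mk (b n) with hBdef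
  have hC : Measurable C := hmc.measurable_mk
  have hA : ∀ n, Measurable (A n) := fun n => (hma n).measurable_mk
  have hB : ∀ n, Measurable (B n) := fun n => (hmb n).measurable_mk
  have hCe : c₀ =ᵐ[volume] C := hmc.ae_eq_mk
  have hAe : ∀ n, a n =ᵐ[volume] A n := fun n => (hma n).ae_eq_mk
  have hBe : ∀ n, b n =ᵐ[volume] B n := fun n => (hmb n).ae_eq_mk
  set F : famIdx N → Ω → ℝ :=
    fun i => Sum.elim (fun _ => C) (fun p => if p.2 then B p.1 else A p.1) i with hFdef
  have hF : ∀ i, Measurable (F i) := by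
    rintro (⟨⟩|⟨n, (_|_)⟩)
    · exact hC
    · exact hA n
    · exact hB n
  have hFindep : iIndepFun (m := fun _ : famIdx N => Real.measurableSpace) F volume := by
    apply iIndepFun_congr_ae hindep
    rintro (⟨⟩|⟨n, (_|_)⟩)
    · exact hCe
    · exact hAe n
    · exact hBe n
  have hlawC : Measure.map C volume = rayleighMeasure (Real.sqrt (ς / 2)) := by
    rw [← Measure.map_congr hCe]; exact hlaw₀
  have hlawA : ∀ n, Measure.map (A n) volume = rayleighMeasure (Real.sqrt (ϱ / 2)) := fun n => by
    rw [← Measure.map_congr (hAe n)]; exact hlawa n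
  have hlawB : ∀ n, Measure.map (B n) volume = rayleighMeasure (Real.sqrt (ϑ / 2)) := fun n => by
    rw [← Measure.map_congr (hBe n)]; exact hlawb n
  -- moments
  have EC : (∫ ω, C ω) = Real.sqrt (π * ς) / 2 := integral_of_rayleigh_law hς hlawC
  have EC2 : (∫ ω, C ω ^ 2) = ς := integral_sq_of_rayleigh_law hς hlawC
  have intC : Integrable C volume := by
    simpa using integrable_pow_of_rayleigh_law hς hlawC 1
  have intC2 : Integrable (fun ω => C ω ^ 2) volume :=
    integrable_pow_of_rayleigh_law hς hlawC 2
  have EA : ∀ n, (∫ ω, A n ω) = Real.sqrt (π * ϱ) / 2 := fun n =>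
    integral_of_rayleigh_law hϱ (hlawA n)
  have EA2 : ∀ n, (∫ ω, A n ω ^ 2) = ϱ := fun n => integral_sq_of_rayleigh_law hϱ (hlawA n)
  have intA : ∀ n, Integrable (A n) volume := fun n => by
    simpa using integrable_pow_of_rayleigh_law hϱ (hlawA n) 1
  have intA2 : ∀ n, Integrable (fun ω => A n ω ^ 2) volume := fun n =>
    integrable_pow_of_rayleigh_law hϱ (hlawA n) 2
  have EB : ∀ n, (∫ ω, B n ω) = Real.sqrt (π * ϑ) / 2 := fun n =>
    integral_of_rayleigh_law hϑ (hlawB n)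
  have EB2 : ∀ n, (∫ ω, B n ω ^ 2) = ϑ := fun n => integral_sq_of_rayleigh_law hϑ (hlawB n)
  have intB : ∀ n, Integrable (B n) volume := fun n => by
    simpa using integrable_pow_of_rayleigh_law hϑ (hlawB n) 1
  have intB2 : ∀ n, Integrable (fun ω => B n ω ^ 2) volume := fun n =>
    integrable_pow_of_rayleigh_law hϑ (hlawB n) 2
  -- independence consequences
  have mul_meas : Measurable fun p : ℝ × ℝ => p.1 * p.2 := measurable_fst.mul measurable_snd
  have hne : ∀ p q : Fin N × Bool, p ≠ q → (Sum.inr p : famIdx N) ≠ Sum.inr q := by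
    intro p q hpq h
    injection h with h'
    exact hpq h'
  have hab : ∀ n, IndepFun (A n) (B n) volume := fun n =>
    hFindep.indepFun (i := Sum.inr (n, false)) (j := Sum.inr (n, true)) (hne _ _ (by simp))
  have hCab : ∀ n, IndepFun C (fun ω => A n ω * B n ω) volume := by
    intro n
    have h := hFindep.indepFun_prodMk hF (Sum.inr (n, false)) (Sum.inr (n, true))
      (Sum.inl ()) (by exact Sum.inr_ne_inl) (by exact Sum.inr_ne_inl)
    exact (h.comp mul_meas measurable_id).symm
  have hABAB : ∀ n m, n ≠ m →
      IndepFun (fun ω => A n ω * B n ω) (fun ω => A m ω * B m ω) volume := by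
    intro n m hnm
    have h := hFindep.indepFun_prodMk_prodMk hF (Sum.inr (n, false)) (Sum.inr (n, true))
      (Sum.inr (m, false)) (Sum.inr (m, true))
      (hne _ _ (by simp [hnm])) (hne _ _ (by simp [hnm])) (hne _ _ (by simp [hnm]))
      (hne _ _ (by simp [hnm]))
    exact h.comp mul_meas mul_meas
  have habsq : ∀ n, IndepFun (fun ω => A n ω ^ 2) (fun ω => B n ω ^ 2) volume := fun n =>
    (hab n).comp (measurable_id.pow_const 2) (measurable_id.pow_const 2)
  -- products
  set Y : Fin N → Ω → ℝ := fun n ω => A n ω * B n ω with hYdef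
  have intY : ∀ n, Integrable (Y n) volume := fun n =>
    (hab n).integrable_mul (intA n) (intB n)
  have EY : ∀ n, (∫ ω, Y n ω) = Real.sqrt (π * ϱ) / 2 * (Real.sqrt (π * ϑ) / 2) := fun n => by
    have h := (hab n).integral_fun_mul_eq_mul_integral (hA n).aestronglyMeasurable (hB n).aestronglyMeasurable
    rw [show (∫ ω, Y n ω) = ∫ ω, A n ω * B n ω from rfl]
    rw [show (∫ ω, A n ω * B n ω) = (∫ ω, A n ω) * ∫ ω, B n ω from h, EA n, EB n]
  have EYsq : ∀ n, (∫ ω, Y n ω * Y n ω) = ϱ * ϑ := fun n => by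
    have heq : (fun ω => Y n ω * Y n ω) = fun ω => A n ω ^ 2 * B n ω ^ 2 := by
      funext ω; simp only [hYdef]; ring
    rw [heq]
    have h := (habsq n).integral_fun_mul_eq_mul_integral ((hA n).pow_const 2).aestronglyMeasurable
      ((hB n).pow_const 2).aestronglyMeasurable
    rw [show (∫ ω, A n ω ^ 2 * B n ω ^ 2) = (∫ ω, A n ω ^ 2) * ∫ ω, B n ω ^ 2 from h,
      EA2 n, EB2 n]
  have intYsq : ∀ n, Integrable (fun ω => Y n ω * Y n ω) volume := fun n => by
    have heq : (fun ω => Y n ω * Y n ω) = fun ω => A n ω ^ 2 * B n ω ^ 2 := by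
      funext ω; simp only [hYdef]; ring
    rw [heq]
    exact (habsq n).integrable_mul (intA2 n) (intB2 n)
  have EYY : ∀ n m, n ≠ m → (∫ ω, Y n ω * Y m ω) =
      (Real.sqrt (π * ϱ) / 2 * (Real.sqrt (π * ϑ) / 2)) *
        (Real.sqrt (π * ϱ) / 2 * (Real.sqrt (π * ϑ) / 2)) := fun n m hnm => by
    have h := (hABAB n m hnm).integral_fun_mul_eq_mul_integral ((hA n).mul (hB n)).aestronglyMeasurable
      ((hA m).mul (hB m)).aestronglyMeasurable
    rw [show (∫ ω, Y n ω * Y m ω) = (∫ ω, Y n ω) * ∫ ω, Y m ω from h, EY n, EY m]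
  have intYYall : ∀ n m, Integrable (fun ω => Y n ω * Y m ω) volume := by
    intro n m
    by_cases h : n = m
    · subst h; exact intYsq n
    · exact (hABAB n m h).integrable_mul (intY n) (intY m)
  have ECY : ∀ n, (∫ ω, C ω * Y n ω) =
      Real.sqrt (π * ς) / 2 * (Real.sqrt (π * ϱ) / 2 * (Real.sqrt (π * ϑ) / 2)) := fun n => by
    have h := (hCab n).integral_fun_mul_eq_mul_integral hC.aestronglyMeasurable
      ((hA n).mul (hB n)).aestronglyMeasurable
    rw [show (∫ ω, C ω * Y n ω) = (∫ ω, C ω) * ∫ ω, Y n ω from h, EC, EY n]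
  have intCY : ∀ n, Integrable (fun ω => C ω * Y n ω) volume := fun n =>
    (hCab n).integrable_mul intC (intY n)
  -- rewrite the integrand a.e.
  have hae : (fun ω => (c₀ ω + ∑ n, a n ω * b n ω) ^ 2) =ᵐ[volume]
      fun ω => (C ω + ∑ n, Y n ω) ^ 2 := by
    have hA' : ∀ᵐ ω ∂(volume : Measure Ω), ∀ n, a n ω = A n ω := ae_all_iff.2 fun n => hAe n
    have hB' : ∀ᵐ ω ∂(volume : Measure Ω), ∀ n, b n ω = B n ω := ae_all_iff.2 fun n => hBe n
    filter_upwards [hCe, hA', hB'] with ω h1 h2 h3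
    rw [h1]
    congr 1
    congr 1
    exact Finset.sum_congr rfl fun n _ => by rw [h2 n, h3 n]
  rw [integral_congr_ae hae]
  -- expand the square
  have hexp : (fun ω => (C ω + ∑ n, Y n ω) ^ 2) =
      fun ω => C ω ^ 2 + 2 * ∑ n, C ω * Y n ω + ∑ n : Fin N, ∑ m : Fin N, Y n ω * Y m ω := by
    funext ω
    rw [add_sq, sq (∑ n, Y n ω), Finset.sum_mul_sum, mul_assoc, Finset.mul_sum]
  rw [hexp]
  have int2 : Integrable (fun ω => 2 * ∑ n, C ω * Y n ω) volume :=
    (integrable_finset_sum Finset.univ fun n _ => intCY n).const_mul 2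
  have int3 : Integrable (fun ω => ∑ n : Fin N, ∑ m : Fin N, Y n ω * Y m ω) volume :=
    integrable_finset_sum _ fun n _ => integrable_finset_sum _ fun m _ => intYYall n m
  have key1 : Integrable (fun ω => C ω ^ 2 + 2 * ∑ n, C ω * Y n ω) volume := intC2.add int2
  have hsplit1 := integral_add (μ := volume)
    (f := fun ω => C ω ^ 2 + 2 * ∑ n, C ω * Y n ω)
    (g := fun ω => ∑ n : Fin N, ∑ m : Fin N, Y n ω * Y m ω) key1 int3
  have hsplit2 := integral_add (μ := volume)
    (f := fun ω => C ω ^ 2) (g := fun ω => 2 * ∑ n, C ω * Y n ω) intC2 int2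
  rw [hsplit1, hsplit2]
  beta_reduce
  rw [integral_const_mul,
    integral_finset_sum _ fun n _ => intCY n,
    integral_finset_sum _ fun n _ => integrable_finset_sum _ fun m _ => intYYall n m]
  have hsum1 : (∑ n : Fin N, ∫ ω, C ω * Y n ω) =
      N * (Real.sqrt (π * ς) / 2 * (Real.sqrt (π * ϱ) / 2 * (Real.sqrt (π * ϑ) / 2))) := by
    rw [Finset.sum_congr rfl fun n _ => ECY n, Finset.sum_const, Finset.card_univ,
      Fintype.card_fin, nsmul_eq_mul]
  have hsum2 : (∑ n : Fin N, ∑ m : Fin N, ∫ ω, Y n ω * Y m ω) =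
      N * (ϱ * ϑ + ((N:ℝ) - 1) * ((Real.sqrt (π * ϱ) / 2 * (Real.sqrt (π * ϑ) / 2)) *
        (Real.sqrt (π * ϱ) / 2 * (Real.sqrt (π * ϑ) / 2)))) := by
    have hrow : ∀ n : Fin N, (∑ m : Fin N, ∫ ω, Y n ω * Y m ω) =
        ϱ * ϑ + ((N:ℝ) - 1) * ((Real.sqrt (π * ϱ) / 2 * (Real.sqrt (π * ϑ) / 2)) *
          (Real.sqrt (π * ϱ) / 2 * (Real.sqrt (π * ϑ) / 2))) := by
      intro n
      rw [← Finset.add_sum_erase _ _ (Finset.mem_univ n)]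
      congr 1
      · exact EYsq n
      · rw [Finset.sum_congr rfl fun m hm => EYY n m (Finset.ne_of_mem_erase hm).symm,
          Finset.sum_const, Finset.card_erase_of_mem (Finset.mem_univ n), Finset.card_univ,
          Fintype.card_fin, nsmul_eq_mul]
        congr 1
        rw [Nat.cast_sub n.pos, Nat.cast_one]
    rw [Finset.sum_congr rfl fun n _ => hrow n, Finset.sum_const, Finset.card_univ,
      Fintype.card_fin, nsmul_eq_mul]
  rw [EC2, hsum1, Finset.sum_congr rfl
    fun n _ => integral_finset_sum Finset.univ fun m _ => intYYall n m, hsum2]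
  -- final algebra
  have h1 : Real.sqrt (π * ϱ) * Real.sqrt (π * ϱ) = π * ϱ :=
    Real.mul_self_sqrt (by positivity)
  have h2 : Real.sqrt (π * ϑ) * Real.sqrt (π * ϑ) = π * ϑ :=
    Real.mul_self_sqrt (by positivity)
  have h3 : Real.sqrt (π * ς) * (Real.sqrt (π * ϱ) * Real.sqrt (π * ϑ)) =
      π * Real.sqrt (π * ς * ϱ * ϑ) := by
    rw [← Real.sqrt_mul (by positivity), ← Real.sqrt_mul (by positivity),
      show π * ς * (π * ϱ * (π * ϑ)) = π ^ 2 * (π * ς * ϱ * ϑ) by ring,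
      Real.sqrt_mul (by positivity), Real.sqrt_sq Real.pi_pos.le]
  linear_combination ((N : ℝ) / 4) * h3 +
    ((N : ℝ) * ((N : ℝ) - 1) / 16) * (Real.sqrt (π * ϑ) * Real.sqrt (π * ϑ)) * h1 +
    ((N : ℝ) * ((N : ℝ) - 1) / 16) * (π * ϱ) * h2
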